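/- In the abstract setting, let λ be a multiple eigenvalue at t with eigenspace Y, let R : X → Y be the B_t-orthogonal projection and P = I − R, let C_t = A_t − λB_t, and let φ_j ∈ Y be strong V-limits of normalized eigenfunctions u_j(t+h_ℓ) along h_ℓ → 0 with first-derivative limits λ̇_j^*. Then z_ℓ^j = (u_j(t+h_ℓ) − φ_j)/h_ℓ satisfies lim_{ℓ→∞} C_t(z_ℓ^j, v) = −Ċ^{*j}_t(φ_j, v) for every v ∈ V, where Ċ^{*j}_t = Ȧ_t − λ̇_j^* B_t − λ Ḃ_t. -/

import Mathlib

open Filter Topology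

lemma aux_cont {X : Type*} [NormedAddCommGroup X] [NormedSpace ℝ X]
    (B : X →ₗ[ℝ] X →ₗ[ℝ] ℝ) (C : ℝ) (hb : ∀ x y, |B x y| ≤ C * ‖x‖ * ‖y‖)
    {f : ℕ → X} {x0 : X} (hf : Tendsto f atTop (𝓝 x0)) (y : X) :
    Tendsto (fun n => B (f n) y) atTop (𝓝 (B x0 y)) := by
  rw [← tendsto_sub_nhds_zero_iff]
  have hg : Tendsto (fun n => C * ‖f n - x0‖ * ‖y‖) atTop (𝓝 (C * ‖(0:X)‖ * ‖y‖)) :=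
    (tendsto_const_nhds.mul ((tendsto_sub_nhds_zero_iff.mpr hf).norm)).mul tendsto_const_nhds
  refine squeeze_zero_norm (fun n => ?_) (by simpa using hg)
  have : B (f n) y - B x0 y = B (f n - x0) y := by simp [map_sub]
  rw [Real.norm_eq_abs, this]
  exact hb _ _

lemma aux_taylor {X : Type*} [NormedAddCommGroup X] [NormedSpace ℝ X]
    (t : ℝ) (B : ℝ → X →ₗ[ℝ] X →ₗ[ℝ] ℝ) (B' : X →ₗ[ℝ] X →ₗ[ℝ] ℝ)
    (CB' : ℝ) (hB'bdd : ∀ u v : X, |B' u v| ≤ CB' * ‖u‖ * ‖v‖)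
    (hder : ∀ ε > (0:ℝ), ∃ η > (0:ℝ), ∀ h : ℝ, h ≠ 0 → |h| < η →
      ∀ u v : X, ‖u‖ ≤ 1 → ‖v‖ ≤ 1 →
        |B (t + h) u v - B t u v - h * B' u v| ≤ ε * |h|)
    (a : ℕ → ℝ) (ha0 : ∀ ℓ, a ℓ ≠ 0) (halim : Tendsto a atTop (𝓝 0))
    {x : ℕ → X} {x0 : X} (hx : Tendsto x atTop (𝓝 x0)) (y : X) :
    Tendsto (fun ℓ => (B (t + a ℓ) (x ℓ) y - B t (x ℓ) y) / a ℓ) atTop (𝓝 (B' x0 y)) := by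
  -- scaled Taylor estimate
  have scaled : ∀ ε > (0:ℝ), ∃ η > (0:ℝ), ∀ h : ℝ, h ≠ 0 → |h| < η →
      ∀ u v : X, |B (t + h) u v - B t u v - h * B' u v| ≤ ε * |h| * ‖u‖ * ‖v‖ := by
    intro ε hε
    obtain ⟨η, hη, H⟩ := hder ε hε
    refine ⟨η, hη, fun h hh hhη u v => ?_⟩
    by_cases hu : u = 0
    · simp [hu]
    by_cases hv : v = 0
    · simp [hv]
    have hcu : (0:ℝ) < ‖u‖ := norm_pos_iff.mpr hu
    have hcv : (0:ℝ) < ‖v‖ := norm_pos_iff.mpr hv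
    have key := H h hh hhη (‖u‖⁻¹ • u) (‖v‖⁻¹ • v)
      (by rw [norm_smul]; simp [abs_of_pos (inv_pos.mpr hcu), inv_mul_cancel₀ hcu.ne'])
      (by rw [norm_smul]; simp [abs_of_pos (inv_pos.mpr hcv), inv_mul_cancel₀ hcv.ne'])
    simp only [map_smul, LinearMap.smul_apply, smul_eq_mul] at key
    have e : ‖v‖⁻¹ * (‖u‖⁻¹ * (B (t + h)) u v) - ‖v‖⁻¹ * (‖u‖⁻¹ * (B t) u v) -
        h * (‖v‖⁻¹ * (‖u‖⁻¹ * B' u v)) =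
        ‖u‖⁻¹ * ‖v‖⁻¹ * (B (t + h) u v - B t u v - h * B' u v) := by ring
    rw [e, abs_mul, abs_mul, abs_inv, abs_inv, abs_of_pos hcu, abs_of_pos hcv] at key
    calc |B (t + h) u v - B t u v - h * B' u v|
        = ‖u‖ * ‖v‖ * (‖u‖⁻¹ * ‖v‖⁻¹ * |B (t + h) u v - B t u v - h * B' u v|) := by
          field_simp
      _ ≤ ‖u‖ * ‖v‖ * (ε * |h|) :=
          mul_le_mul_of_nonneg_left key (by positivity)
      _ = ε * |h| * ‖u‖ * ‖v‖ := by ring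
  set M := ‖x0‖ + 1 with hM
  have hM0 : (0:ℝ) < M := by positivity
  have hxb : ∀ᶠ ℓ in atTop, ‖x ℓ‖ ≤ M := by
    have := hx.norm.eventually (eventually_le_nhds (by linarith : ‖x0‖ < M))
    exact this
  have hzero : Tendsto (fun ℓ =>
      (B (t + a ℓ) (x ℓ) y - B t (x ℓ) y) / a ℓ - B' (x ℓ) y) atTop (𝓝 0) := by
    rw [NormedAddCommGroup.tendsto_nhds_zero]
    intro ε hε
    set K := M * ‖y‖ + 1 with hK
    have hK0 : (0:ℝ) < K := by positivity
    obtain ⟨η, hη, H⟩ := scaled (ε / K) (by positivity)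
    have ha_small : ∀ᶠ ℓ in atTop, |a ℓ| < η := by
      have := (Metric.tendsto_nhds.mp halim) η hη
      simpa [Real.dist_eq, sub_zero] using this
    filter_upwards [ha_small, hxb] with ℓ haℓ hxℓ
    have e1 : (B (t + a ℓ) (x ℓ) y - B t (x ℓ) y) / a ℓ - B' (x ℓ) y =
        (B (t + a ℓ) (x ℓ) y - B t (x ℓ) y - a ℓ * B' (x ℓ) y) / a ℓ := by
      field_simp [ha0 ℓ]
    rw [Real.norm_eq_abs, e1, abs_div, div_lt_iff₀ (abs_pos.mpr (ha0 ℓ))]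
    have h2 := H (a ℓ) (ha0 ℓ) haℓ (x ℓ) y
    have h3 : ε / K * |a ℓ| * ‖x ℓ‖ * ‖y‖ < ε * |a ℓ| := by
      have hap : (0:ℝ) < |a ℓ| := abs_pos.mpr (ha0 ℓ)
      have h4 : ‖x ℓ‖ * ‖y‖ ≤ M * ‖y‖ :=
        mul_le_mul_of_nonneg_right hxℓ (norm_nonneg _)
      have h5 : ε / K * (‖x ℓ‖ * ‖y‖) ≤ ε / K * (M * ‖y‖) :=
        mul_le_mul_of_nonneg_left h4 (by positivity)
      have h6 : ε / K * (M * ‖y‖) < ε / K * K :=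
        mul_lt_mul_of_pos_left (by linarith) (by positivity)
      have h7 : ε / K * K = ε := by field_simp
      nlinarith
    calc |B (t + a ℓ) (x ℓ) y - B t (x ℓ) y - a ℓ * B' (x ℓ) y|
        ≤ ε / K * |a ℓ| * ‖x ℓ‖ * ‖y‖ := h2
      _ < ε * |a ℓ| := h3
  have hcont : Tendsto (fun ℓ => B' (x ℓ) y) atTop (𝓝 (B' x0 y)) :=
    aux_cont B' CB' hB'bdd hx y
  have := hzero.add hcont
  simpa using this

theorem hadamard_stmt12
    {V : Type*} [NormedAddCommGroup V] [InnerProductSpace ℝ V] [CompleteSpace V]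
    {X : Type*} [NormedAddCommGroup X] [InnerProductSpace ℝ X] [CompleteSpace X]
    (ι : V →L[ℝ] X) (hι : Function.Injective ι) (hcompact : IsCompactOperator ι)
    (A : ℝ → V →ₗ[ℝ] V →ₗ[ℝ] ℝ) (B : ℝ → X →ₗ[ℝ] X →ₗ[ℝ] ℝ)
    (hAsymm : ∀ t', ∀ u v : V, A t' u v = A t' v u)
    (hBsymm : ∀ t', ∀ u v : X, B t' u v = B t' v u)
    (CA : ℝ) (hAbdd : ∀ t', ∀ u v : V, |A t' u v| ≤ CA * ‖u‖ * ‖v‖)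
    (CB : ℝ) (hBbdd : ∀ t', ∀ u v : X, |B t' u v| ≤ CB * ‖u‖ * ‖v‖)
    (δ : ℝ) (hδ : 0 < δ)
    (hAcoer : ∀ t', ∀ v : V, δ * ‖v‖ ^ 2 ≤ A t' v v)
    (hBcoer : ∀ t', ∀ v : X, δ * ‖v‖ ^ 2 ≤ B t' v v)
    (t : ℝ)
    (A' : V →ₗ[ℝ] V →ₗ[ℝ] ℝ) (B' : X →ₗ[ℝ] X →ₗ[ℝ] ℝ)
    (CA' : ℝ) (hA'bdd : ∀ u v : V, |A' u v| ≤ CA' * ‖u‖ * ‖v‖)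
    (CB' : ℝ) (hB'bdd : ∀ u v : X, |B' u v| ≤ CB' * ‖u‖ * ‖v‖)
    (hAder : ∀ ε > (0:ℝ), ∃ η > (0:ℝ), ∀ h : ℝ, h ≠ 0 → |h| < η →
      ∀ u v : V, ‖u‖ ≤ 1 → ‖v‖ ≤ 1 →
        |A (t + h) u v - A t u v - h * A' u v| ≤ ε * |h|)
    (hBder : ∀ ε > (0:ℝ), ∃ η > (0:ℝ), ∀ h : ℝ, h ≠ 0 → |h| < η →
      ∀ u v : X, ‖u‖ ≤ 1 → ‖v‖ ≤ 1 →
        |B (t + h) u v - B t u v - h * B' u v| ≤ ε * |h|)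
    (lam : ℕ → ℝ → ℝ) (u : ℕ → ℝ → V) (j : ℕ)
    -- `u_j(t')` : `B_{t'}`-normalized eigenfunctions for `λ_j(t')`
    (hnorm : ∀ t', B t' (ι (u j t')) (ι (u j t')) = 1)
    (heig : ∀ t', ∀ v : V, A t' (u j t') v = lam j t' * B t' (ι (u j t')) (ι v))
    (lambda : ℝ) (hlambda : lambda = lam j t)
    -- `Y` : the eigenspace of the multiple eigenvalue `λ` at `t`; `C_t` vanishes on `Y × V`
    (Y : Submodule ℝ V)
    (hYeig : ∀ w : V, w ∈ Y ↔ ∀ v : V, A t w v = lambda * B t (ι w) (ι v))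
    (hCvanish : ∀ w ∈ Y, ∀ v : V, A t w v - lambda * B t (ι w) (ι v) = 0)
    -- sequence `h_ℓ → 0` along which `u_j(t+h_ℓ) → φ_j` strongly in `V`, `φ_j ∈ Y`,
    -- and the first difference quotients of `λ_j` converge to `λ̇_j^*`
    (hseq : ℕ → ℝ) (hseq0 : ∀ ℓ, hseq ℓ ≠ 0)
    (hseqlim : Filter.Tendsto hseq Filter.atTop (nhds 0))
    (φ : V) (hφY : φ ∈ Y)
    (hφlim : Filter.Tendsto (fun ℓ => u j (t + hseq ℓ)) Filter.atTop (nhds φ))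
    (lamdot : ℝ)
    (hlamdot : Filter.Tendsto (fun ℓ => (lam j (t + hseq ℓ) - lam j t) / hseq ℓ)
      Filter.atTop (nhds lamdot)) :
    ∀ v : V,
      Filter.Tendsto
        (fun ℓ =>
          A t ((hseq ℓ)⁻¹ • (u j (t + hseq ℓ) - φ)) v -
            lambda * B t (ι ((hseq ℓ)⁻¹ • (u j (t + hseq ℓ) - φ))) (ι v))
        Filter.atTop
        (nhds (-(A' φ v - lamdot * B t (ι φ) (ι v) - lambda * B' (ι φ) (ι v)))) := by
  subst hlambda
  intro v
  -- the three pieces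
  set a : ℕ → ℝ := hseq with ha_def
  have hιφ : Filter.Tendsto (fun ℓ => ι (u j (t + hseq ℓ))) Filter.atTop (nhds (ι φ)) :=
    (ι.continuous.tendsto φ).comp hφlim
  -- limits of the difference quotients
  have hg2 : Filter.Tendsto
      (fun ℓ => (B (t + hseq ℓ) (ι (u j (t + hseq ℓ))) (ι v) -
        B t (ι (u j (t + hseq ℓ))) (ι v)) / hseq ℓ)
      Filter.atTop (nhds (B' (ι φ) (ι v))) :=
    aux_taylor t B B' CB' hB'bdd hBder hseq hseq0 hseqlim hιφ (ι v)
  have hg3 : Filter.Tendsto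
      (fun ℓ => (A (t + hseq ℓ) (u j (t + hseq ℓ)) v - A t (u j (t + hseq ℓ)) v) / hseq ℓ)
      Filter.atTop (nhds (A' φ v)) :=
    aux_taylor t A A' CA' hA'bdd hAder hseq hseq0 hseqlim hφlim v
  -- convergence of B_{t+h}(u_ℓ, v) to B_t(φ, v)
  have hBconv : Filter.Tendsto
      (fun ℓ => B (t + hseq ℓ) (ι (u j (t + hseq ℓ))) (ι v))
      Filter.atTop (nhds (B t (ι φ) (ι v))) := by
    have hcont := aux_cont (B t) CB (hBbdd t) hιφ (ι v)
    have h0 : Filter.Tendsto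
        (fun ℓ => hseq ℓ * ((B (t + hseq ℓ) (ι (u j (t + hseq ℓ))) (ι v) -
          B t (ι (u j (t + hseq ℓ))) (ι v)) / hseq ℓ) + B t (ι (u j (t + hseq ℓ))) (ι v))
        Filter.atTop (nhds (0 * B' (ι φ) (ι v) + B t (ι φ) (ι v))) :=
      (hseqlim.mul hg2).add hcont
    rw [zero_mul, zero_add] at h0
    refine h0.congr fun ℓ => ?_
    have hne0 : hseq ℓ ≠ 0 := hseq0 ℓ
    rw [mul_div_assoc', mul_div_cancel_left₀ _ hne0]; ring
  have hg1 : Filter.Tendsto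
      (fun ℓ => (lam j (t + hseq ℓ) - lam j t) / hseq ℓ *
        B (t + hseq ℓ) (ι (u j (t + hseq ℓ))) (ι v))
      Filter.atTop (nhds (lamdot * B t (ι φ) (ι v))) := hlamdot.mul hBconv
  have hG := (hg1.add (hg2.const_mul (lam j t))).sub hg3
  have hval : lamdot * B t (ι φ) (ι v) + lam j t * B' (ι φ) (ι v) - A' φ v =
      -(A' φ v - lamdot * B t (ι φ) (ι v) - lam j t * B' (ι φ) (ι v)) := by ring
  rw [hval] at hG
  refine hG.congr fun ℓ => ?_
  have hC := hCvanish φ hφY v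
  have hE := heig (t + hseq ℓ) v
  have hne := hseq0 ℓ
  simp only [map_sub, map_smul, LinearMap.sub_apply, LinearMap.smul_apply, smul_eq_mul,
    ContinuousLinearMap.map_smul, ContinuousLinearMap.map_sub]
  linear_combination (hseq ℓ)⁻¹ * hC - (hseq ℓ)⁻¹ * hE
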